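/- For every integer K ≥ 1 and every even index j with 2 ≤ j ≤ 2K+2, the log-canonical bracket of the cluster parametrization satisfies {s_j, λ}_y = s_j λ, as an identity of rational functions of y on (ℂ*)^{2K}. -/

import Mathlib

noncomputable section

open Finset

/-- The space of cluster variables `(y_1, …, y_{2K})`; we use 1-based indexing, so the
vector has `2K+1` slots and slot `0` is a dummy unused coordinate. -/
abbrev YV (K : ℕ) := Fin (2*K+1) → ℂ

/-- Access `y_j` by its (1-based) natural-number index. -/
def yv (K : ℕ) (y : YV K) (j : ℕ) : ℂ := y ⟨j % (2*K+1), Nat.mod_lt _ (by omega)⟩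

/-- Partial derivative with respect to `y_i`. -/
def pY (K : ℕ) (i : Fin (2*K+1)) (f : YV K → ℂ) (y : YV K) : ℂ :=
  fderiv ℂ f y (Pi.single i 1)

/-- The log-canonical bracket
`{f, g}_y = (1/4) Σ_{i=1}^{2K−1} y_i y_{i+1} (∂f/∂y_i ∂g/∂y_{i+1} − ∂f/∂y_{i+1} ∂g/∂y_i)`. -/
def lcBr (K : ℕ) (f g : YV K → ℂ) (y : YV K) : ℂ :=
  (1/4 : ℂ) * ∑ i : Fin (2*K-1),
    yv K y ((i:ℕ)+1) * yv K y ((i:ℕ)+2) *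
      (pY K ⟨(i:ℕ)+1, by have := i.isLt; omega⟩ f y *
         pY K ⟨(i:ℕ)+2, by have := i.isLt; omega⟩ g y
       - pY K ⟨(i:ℕ)+2, by have := i.isLt; omega⟩ f y *
         pY K ⟨(i:ℕ)+1, by have := i.isLt; omega⟩ g y)

/-- `nestList [a₁, …, a_m] = 1 + a₁(1 + a₂(⋯(1 + a_m)⋯))`. -/
def nestList : List ℂ → ℂ
  | [] => 1
  | a :: t => 1 + a * nestList t

/-- The Stokes parameters `s_n`, `n = 1, …, 2K+2` (paper's 1-based indexing) of the
cluster parametrization: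
`s_1 = −y_1^{−2}`;
`s_{2k} = (1+y_{2k}²)·∏_{j=1}^{2k} y_j^{2(−1)^{j+1}}` for `k = 1, …, K`;
`s_{2k+1} = −(1+y_{2k+1}²)·∏_{j=1}^{2k+1} y_j^{2(−1)^{j}}` for `k = 1, …, K−1`;
`s_{2K+1} = −∏_{j=1}^{2K} y_j^{2(−1)^{j}}`;
`s_{2K+2} = y_1²·(1+y_2²(1+y_4²(⋯(1+y_{2K}²)⋯)))·∏_{j=1}^{K} y_{2j}^{−4}`. -/
def sY (K : ℕ) (n : ℕ) (y : YV K) : ℂ :=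
  if n = 1 then -(yv K y 1) ^ (-2 : ℤ)
  else if n = 2*K+1 then -∏ j ∈ range (2*K), (yv K y (j+1)) ^ ((-1:ℤ)^(j+1) * 2)
  else if n = 2*K+2 then
    (yv K y 1)^2 * nestList (List.ofFn fun k : Fin K => (yv K y (2*(k:ℕ)+2))^2)
      * ∏ j ∈ range K, (yv K y (2*(j+1))) ^ (-4 : ℤ)
  else if n % 2 = 0 then
    (1 + (yv K y n)^2) * ∏ j ∈ range n, (yv K y (j+1)) ^ ((-1:ℤ)^j * 2)
  else -((1 + (yv K y n)^2) * ∏ j ∈ range n, (yv K y (j+1)) ^ ((-1:ℤ)^(j+1) * 2))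

/-- `λ = ∏_{j=1}^K y_{2j}²`. -/
def lamY (K : ℕ) (y : YV K) : ℂ := ∏ j ∈ range K, (yv K y (2*(j+1)))^2

/-! ### Auxiliary machinery -/

/-- The `Fin` index corresponding to the 1-based natural index `m`. -/
def cF (K m : ℕ) : Fin (2*K+1) := ⟨m % (2*K+1), Nat.mod_lt _ (by omega)⟩

lemma yv_cF (K : ℕ) (y : YV K) (m : ℕ) : yv K y m = y (cF K m) := rfl

lemma cF_ne (K : ℕ) {a b : ℕ} (ha : a < 2*K+1) (hb : b < 2*K+1) (hab : a ≠ b) :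
    cF K a ≠ cF K b := by
  simp only [Ne, Fin.ext_iff, cF]
  rw [Nat.mod_eq_of_lt ha, Nat.mod_eq_of_lt hb]
  exact hab

lemma pY_eq {K : ℕ} {f : YV K → ℂ} {φ : YV K →L[ℂ] ℂ} {y : YV K}
    (h : HasFDerivAt f φ y) (i : Fin (2*K+1)) :
    pY K i f y = φ (Pi.single i 1) := by
  rw [pY, h.fderiv]

lemma hasFDerivAt_coordPow {n : ℕ} (c : Fin n) (p : ℕ) (y : Fin n → ℂ) :
    HasFDerivAt (fun z : Fin n → ℂ => (z c)^p)
      (((p:ℂ) * (y c)^(p-1)) • (ContinuousLinearMap.proj c : (Fin n → ℂ) →L[ℂ] ℂ)) y := by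
  exact
    (hasDerivAt_pow p (y c)).comp_hasFDerivAt y
      (ContinuousLinearMap.proj (R := ℂ) (φ := fun _ : Fin n => ℂ) c).hasFDerivAt

lemma hasFDerivAt_coordZpow {n : ℕ} (c : Fin n) (e : ℤ) (y : Fin n → ℂ) (hc : y c ≠ 0) :
    HasFDerivAt (fun z : Fin n → ℂ => (z c)^e)
      (((e:ℂ) * (y c)^(e-1)) • (ContinuousLinearMap.proj c : (Fin n → ℂ) →L[ℂ] ℂ)) y := by
  exact
    (hasDerivAt_zpow e (y c) (Or.inl hc)).comp_hasFDerivAt y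
      (ContinuousLinearMap.proj (R := ℂ) (φ := fun _ : Fin n => ℂ) c).hasFDerivAt

/-- Derivative of `λ`. -/
lemma hasFDerivAt_lamY (K : ℕ) (y : YV K) :
    HasFDerivAt (lamY K)
      (∑ t ∈ range K, (∏ i ∈ (range K).erase t, (y (cF K (2*(i+1))))^2) •
        ((((2:ℕ):ℂ) * (y (cF K (2*(t+1))))^(2-1)) •
          (ContinuousLinearMap.proj (cF K (2*(t+1))) : YV K →L[ℂ] ℂ))) y := by
  exact HasFDerivAt.finset_prod (u := range K)
    (g := fun t (z : YV K) => (z (cF K (2*(t+1))))^2)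
    (fun t _ => hasFDerivAt_coordPow (cF K (2*(t+1))) 2 y)

lemma pY_lamY (K : ℕ) (y : YV K) (a : Fin (2*K+1)) :
    pY K a (lamY K) y
      = ∑ t ∈ range K, (∏ i ∈ (range K).erase t, (y (cF K (2*(i+1))))^2) *
          ((2 * y (cF K (2*(t+1)))) * (if cF K (2*(t+1)) = a then 1 else 0)) := by
  rw [pY_eq (hasFDerivAt_lamY K y)]
  simp only [ContinuousLinearMap.sum_apply, ContinuousLinearMap.smul_apply,
    ContinuousLinearMap.proj_apply, smul_eq_mul, Pi.single_apply]
  apply Finset.sum_congr rfl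
  intro t _
  push_cast
  ring

lemma pY_lamY_odd (K : ℕ) (y : YV K) (m : ℕ) (hm : m % 2 = 1) (hm2 : m ≤ 2*K) :
    pY K (cF K m) (lamY K) y = 0 := by
  rw [pY_lamY]
  apply Finset.sum_eq_zero
  intro t ht
  rw [if_neg, mul_zero, mul_zero]
  exact cF_ne K (by simp at ht; omega) (by omega) (by omega)

lemma pY_lamY_even (K : ℕ) (y : YV K) (t : ℕ) (ht : t < K) :
    y (cF K (2*(t+1))) * pY K (cF K (2*(t+1))) (lamY K) y = 2 * lamY K y := by
  rw [pY_lamY, Finset.sum_eq_single t]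
  · rw [if_pos rfl, mul_one]
    have := Finset.mul_prod_erase (range K)
      (fun i => (y (cF K (2*(i+1))))^2) (Finset.mem_range.mpr ht)
    simp only [lamY, yv_cF]
    rw [← this]; ring
  · intro b hb hbt
    rw [if_neg, mul_zero, mul_zero]
    exact cF_ne K (by simp at hb; omega) (by omega) (by omega)
  · intro h; exact absurd (Finset.mem_range.mpr ht) h

/-- `nestList` of an `ofFn` list as a finite sum of partial products. -/
lemma nestList_ofFn (f : ℕ → ℂ) :
    ∀ n : ℕ, nestList (List.ofFn (fun k : Fin n => f k))
      = ∑ m ∈ range (n+1), ∏ k ∈ range m, f k := by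
  intro n
  induction n generalizing f with
  | zero => simp [nestList]
  | succ n ih =>
    rw [List.ofFn_succ]
    show (1 : ℂ) + f 0 * nestList (List.ofFn fun k : Fin n => f ((k:ℕ)+1)) = _
    rw [ih (fun k => f (k+1)), Finset.sum_range_succ' (fun m => ∏ k ∈ range m, f k)]
    simp only [Finset.prod_range_succ' f, Finset.range_zero, Finset.prod_empty]
    rw [Finset.mul_sum, add_comm]
    congr 1
    apply Finset.sum_congr rfl
    intro m _
    ring

/-- Key derivative fact: `y₁ ∂₁ s_j = 2 s_j` for even `j`. -/
lemma sY_even_D1 (K : ℕ) (hK : 1 ≤ K) (y : YV K)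
    (hy : ∀ i : Fin (2*K+1), (i:ℕ) ≠ 0 → y i ≠ 0)
    (j : ℕ) (heven : Even j) (hj1 : 2 ≤ j) (hj : j ≤ 2*K+2) :
    y (cF K 1) * pY K (cF K 1) (sY K j) y = 2 * sY K j y := by
  have hyne : ∀ m : ℕ, 1 ≤ m → m ≤ 2*K → y (cF K m) ≠ 0 := by
    intro m h1 h2
    apply hy
    simp only [cF]
    rw [Nat.mod_eq_of_lt (by omega)]
    omega
  have hj2 : j % 2 = 0 := Nat.even_iff.mp heven
  rcases eq_or_lt_of_le hj with hcase | hcase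
  · -- j = 2K+2
    subst hcase
    have hs : sY K (2*K+2) = fun z : YV K =>
        (z (cF K 1))^2
          * (∑ m ∈ range (K+1), ∏ k ∈ range m, (z (cF K (2*k+2)))^2)
          * ∏ i ∈ range K, (z (cF K (2*(i+1))))^(-4:ℤ) := by
      funext z
      rw [sY, if_neg (by omega), if_neg (by omega), if_pos rfl]
      rw [nestList_ofFn (fun k => (yv K z (2*k+2))^2) K]
      rfl
    rw [hs]
    have h1 := hasFDerivAt_coordPow (cF K 1) 2 y
    have h2 : HasFDerivAt
        (fun z : YV K => ∑ m ∈ range (K+1), ∏ k ∈ range m, (z (cF K (2*k+2)))^2)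
        (∑ m ∈ range (K+1), ∑ k ∈ range m,
          (∏ i ∈ (range m).erase k, (y (cF K (2*i+2)))^2) •
            ((((2:ℕ):ℂ) * (y (cF K (2*k+2)))^(2-1)) •
              (ContinuousLinearMap.proj (cF K (2*k+2)) : YV K →L[ℂ] ℂ))) y := by
      apply HasFDerivAt.fun_sum
      intro m _
      exact HasFDerivAt.finset_prod (u := range m)
        (g := fun k (z : YV K) => (z (cF K (2*k+2)))^2)
        (fun k _ => hasFDerivAt_coordPow (cF K (2*k+2)) 2 y)
    have h3 : HasFDerivAt
        (fun z : YV K => ∏ i ∈ range K, (z (cF K (2*(i+1))))^(-4:ℤ))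
        (∑ t ∈ range K, (∏ i ∈ (range K).erase t, (y (cF K (2*(i+1))))^(-4:ℤ)) •
          ((((-4:ℤ):ℂ) * (y (cF K (2*(t+1))))^((-4:ℤ)-1)) •
            (ContinuousLinearMap.proj (cF K (2*(t+1))) : YV K →L[ℂ] ℂ))) y := by
      exact HasFDerivAt.finset_prod (u := range K)
        (g := fun t (z : YV K) => (z (cF K (2*(t+1))))^(-4:ℤ))
        (fun t ht => hasFDerivAt_coordZpow (cF K (2*(t+1))) (-4) y
          (hyne _ (by omega) (by simp at ht; omega)))
    have h := (h1.fun_mul h2).fun_mul h3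
    have hne : ∀ b : ℕ, 2 ≤ b → b ≤ 2*K →
        (Pi.single (cF K 1) (1:ℂ) : YV K) (cF K b) = 0 := by
      intro b hb1 hb2
      rw [Pi.single_apply, if_neg]
      exact cF_ne K (by omega) (by omega) (by omega)
    have hz3 : (∑ t ∈ range K, (∏ i ∈ (range K).erase t, (y (cF K (2*(i+1))))^(-4:ℤ)) •
          ((((-4:ℤ):ℂ) * (y (cF K (2*(t+1))))^((-4:ℤ)-1)) •
            (ContinuousLinearMap.proj (cF K (2*(t+1))) : YV K →L[ℂ] ℂ)))
          (Pi.single (cF K 1) (1:ℂ)) = 0 := by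
      rw [ContinuousLinearMap.sum_apply]
      apply Finset.sum_eq_zero
      intro t ht
      simp only [ContinuousLinearMap.smul_apply, ContinuousLinearMap.proj_apply, smul_eq_mul]
      rw [hne (2*(t+1)) (by omega) (by simp at ht; omega)]
      ring
    have hz2 : (∑ m ∈ range (K+1), ∑ k ∈ range m,
          (∏ i ∈ (range m).erase k, (y (cF K (2*i+2)))^2) •
            ((((2:ℕ):ℂ) * (y (cF K (2*k+2)))^(2-1)) •
              (ContinuousLinearMap.proj (cF K (2*k+2)) : YV K →L[ℂ] ℂ)))
          (Pi.single (cF K 1) (1:ℂ)) = 0 := by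
      rw [ContinuousLinearMap.sum_apply]
      apply Finset.sum_eq_zero
      intro m hm
      rw [ContinuousLinearMap.sum_apply]
      apply Finset.sum_eq_zero
      intro k hk
      simp only [ContinuousLinearMap.smul_apply, ContinuousLinearMap.proj_apply, smul_eq_mul]
      rw [hne (2*k+2) (by omega) (by simp at hm hk; omega)]
      ring
    rw [pY_eq h]
    simp only [ContinuousLinearMap.add_apply, ContinuousLinearMap.smul_apply, smul_eq_mul]
    rw [hz3, hz2]
    simp only [ContinuousLinearMap.smul_apply, ContinuousLinearMap.proj_apply, smul_eq_mul,
      Pi.single_apply, if_pos rfl]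
    push_cast
    norm_num
    ring
  · -- 2 ≤ j ≤ 2K
    have hjK : j ≤ 2*K := by omega
    have hs : sY K j = fun z : YV K =>
        (1 + (z (cF K j))^2) * ∏ i ∈ range j, (z (cF K (i+1)))^((-1:ℤ)^i * 2) := by
      funext z
      rw [sY, if_neg (by omega), if_neg (by omega), if_neg (by omega), if_pos hj2]
      rfl
    rw [hs]
    have h1 := (hasFDerivAt_coordPow (cF K j) 2 y).const_add 1
    have h2 : HasFDerivAt
        (fun z : YV K => ∏ i ∈ range j, (z (cF K (i+1)))^((-1:ℤ)^i * 2))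
        (∑ t ∈ range j, (∏ i ∈ (range j).erase t, (y (cF K (i+1)))^((-1:ℤ)^i * 2)) •
          (((((-1:ℤ)^t * 2 : ℤ):ℂ) * (y (cF K (t+1)))^((-1:ℤ)^t * 2 - 1)) •
            (ContinuousLinearMap.proj (cF K (t+1)) : YV K →L[ℂ] ℂ))) y := by
      exact HasFDerivAt.finset_prod (u := range j)
        (g := fun t (z : YV K) => (z (cF K (t+1)))^((-1:ℤ)^t * 2))
        (fun t ht => hasFDerivAt_coordZpow (cF K (t+1)) ((-1:ℤ)^t * 2) y
          (hyne _ (by omega) (by simp at ht; omega)))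
    have h := h1.fun_mul h2
    rw [pY_eq h]
    simp only [ContinuousLinearMap.add_apply, ContinuousLinearMap.smul_apply,
      ContinuousLinearMap.sum_apply, ContinuousLinearMap.proj_apply, smul_eq_mul]
    rw [Finset.sum_eq_single 0]
    · rw [Pi.single_apply, if_pos rfl, Pi.single_apply,
        if_neg (cF_ne K (by omega) (by omega) (by omega))]
      have hprod := Finset.mul_prod_erase (range j)
        (fun i => (y (cF K (i+1)))^((-1:ℤ)^i * 2)) (Finset.mem_range.mpr (by omega : 0 < j))
      simp only [pow_zero, one_mul] at hprod ⊢
      rw [← hprod]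
      push_cast
      norm_num
      ring
    · intro b hb hb0
      rw [Pi.single_apply, if_neg (cF_ne K (by simp at hb; omega) (by omega) (by omega))]
      ring
    · intro h0; exact absurd (Finset.mem_range.mpr (by omega : 0 < j)) h0

/-- for every even index `j` with `2 ≤ j ≤ 2K+2`,
`{s_j, λ}_y = s_j λ`, identically on `(ℂ*)^{2K}`. -/
theorem cluster_bracket_sEven_lambda (K : ℕ) (hK : 1 ≤ K) (y : YV K)
    (hy : ∀ i : Fin (2*K+1), (i:ℕ) ≠ 0 → y i ≠ 0)
    (j : ℕ) (heven : Even j) (hj1 : 2 ≤ j) (hj : j ≤ 2*K+2) :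
    lcBr K (sY K j) (lamY K) y = sY K j y * lamY K y := by
  set W : ℕ → ℂ := fun i => if i % 2 = 0
    then 2 * lamY K y * (y (cF K (i+1)) * pY K (cF K (i+1)) (sY K j) y) else 0 with hW
  have key : ∑ i : Fin (2*K-1),
      yv K y ((i:ℕ)+1) * yv K y ((i:ℕ)+2) *
        (pY K ⟨(i:ℕ)+1, by have := i.isLt; omega⟩ (sY K j) y *
           pY K ⟨(i:ℕ)+2, by have := i.isLt; omega⟩ (lamY K) y
         - pY K ⟨(i:ℕ)+2, by have := i.isLt; omega⟩ (sY K j) y *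
           pY K ⟨(i:ℕ)+1, by have := i.isLt; omega⟩ (lamY K) y)
      = ∑ m ∈ range (2*K-1), (W m - W (m+1)) := by
    rw [← Fin.sum_univ_eq_sum_range (fun m => W m - W (m+1)) (2*K-1)]
    apply Finset.sum_congr rfl
    intro i _
    have hi := i.isLt
    have e1 : (⟨(i:ℕ)+1, by omega⟩ : Fin (2*K+1)) = cF K ((i:ℕ)+1) := by
      simp only [cF, Fin.mk.injEq]
      rw [Nat.mod_eq_of_lt (by omega)]
    have e2 : (⟨(i:ℕ)+2, by omega⟩ : Fin (2*K+1)) = cF K ((i:ℕ)+2) := by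
      simp only [cF, Fin.mk.injEq]
      rw [Nat.mod_eq_of_lt (by omega)]
    rw [e1, e2, yv_cF, yv_cF]
    rcases Nat.even_or_odd (i:ℕ) with hpar | hpar
    · have hm : (i:ℕ) % 2 = 0 := Nat.even_iff.mp hpar
      have hodd : pY K (cF K ((i:ℕ)+1)) (lamY K) y = 0 :=
        pY_lamY_odd K y _ (by omega) (by omega)
      have heven2 : y (cF K (2*((i:ℕ)/2+1))) * pY K (cF K (2*((i:ℕ)/2+1))) (lamY K) y
          = 2 * lamY K y := pY_lamY_even K y ((i:ℕ)/2) (by omega)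
      have hidx : 2*((i:ℕ)/2+1) = (i:ℕ)+2 := by omega
      rw [hidx] at heven2
      simp only [hW, if_pos hm, if_neg (by omega : ¬ ((i:ℕ)+1) % 2 = 0)]
      rw [hodd]
      linear_combination (y (cF K ((i:ℕ)+1)) * pY K (cF K ((i:ℕ)+1)) (sY K j) y) * heven2
    · have hm : (i:ℕ) % 2 = 1 := Nat.odd_iff.mp hpar
      have hodd : pY K (cF K ((i:ℕ)+2)) (lamY K) y = 0 :=
        pY_lamY_odd K y _ (by omega) (by omega)
      have heven2 : y (cF K (2*((((i:ℕ)-1)/2)+1))) * pY K (cF K (2*((((i:ℕ)-1)/2)+1))) (lamY K) y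
          = 2 * lamY K y := pY_lamY_even K y (((i:ℕ)-1)/2) (by omega)
      have hidx : 2*((((i:ℕ)-1)/2)+1) = (i:ℕ)+1 := by omega
      rw [hidx] at heven2
      simp only [hW, if_neg (by omega : ¬ (i:ℕ) % 2 = 0), if_pos (by omega : ((i:ℕ)+1) % 2 = 0)]
      rw [hodd]
      linear_combination (-(y (cF K ((i:ℕ)+2)) * pY K (cF K ((i:ℕ)+2)) (sY K j) y)) * heven2
  have hD1 := sY_even_D1 K hK y hy j heven hj1 hj
  rw [lcBr, key, Finset.sum_range_sub' W (2*K-1)]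
  have hW0 : W 0 = 2 * lamY K y * (2 * sY K j y) := by
    simp only [hW, if_pos (by norm_num : 0 % 2 = 0)]
    rw [hD1]
  have hWend : W (2*K-1) = 0 := by
    simp only [hW, if_neg (by omega : ¬ (2*K-1) % 2 = 0)]
  rw [hW0, hWend]
  ring
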